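/- arXiv:math/0409587 — 5 statements merged into one kernel-verified Lean document; each statement's English description precedes it below -/
import Mathlib

section
/- For all a, b ∈ SL(n,ℝ) and all u ∈ sl(n,ℝ): −½( a σ(b)⁻¹ σ(b a⁻¹ u a b⁻¹) σ(b) a⁻¹ − σ(b a⁻¹ u a b⁻¹) ) + ½ a b⁻¹ ( b σ(a)⁻¹ σ(u) σ(a) b⁻¹ − σ(u) ) b a⁻¹ = ½( σ(b a⁻¹) σ(u) σ(a b⁻¹) − a b⁻¹ σ(u) b a⁻¹ ). In particular the left-hand side depends on (a,b) only through s = a b⁻¹. (This is the computation showing that the bivector P_D^σ is projectable onto S = D/G₊ ≅ G, with projection P_S^σ(s)(ξ) = ½(Ad_{σ(s)⁻¹} − Ad_s)(σ(K⁻¹(ξ))).) -/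
/- STATEMENT 7: the computation showing that P_D^σ is projectable onto
S = D/G₊ ≅ G via (a,b) ↦ ab⁻¹; here σ(m) = J m J with J² = 1.  The left-hand
side depends on (a,b) only through s = ab⁻¹ and equals
½(Ad_{σ(s)⁻¹} − Ad_s)(σ(u)). -/
theorem stmt_7 (n : ℕ) (hn : 2 ≤ n)
    (J a b u : Matrix (Fin n) (Fin n) ℝ)
    (hJ : J * J = 1) (ha : a.det = 1) (hb : b.det = 1)
    (hu : u.trace = 0) :
    -((2:ℝ)⁻¹) • (a * (J * b * J)⁻¹ * (J * (b * a⁻¹ * u * a * b⁻¹) * J) * (J * b * J) * a⁻¹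
          - J * (b * a⁻¹ * u * a * b⁻¹) * J)
      + (2:ℝ)⁻¹ • (a * b⁻¹ * (b * (J * a * J)⁻¹ * (J * u * J) * (J * a * J) * b⁻¹ - J * u * J)
          * (b * a⁻¹))
    = (2:ℝ)⁻¹ • (J * (b * a⁻¹) * J * (J * u * J) * (J * (a * b⁻¹) * J)
        - a * b⁻¹ * (J * u * J) * (b * a⁻¹)) := by
  haveI : Invertible J := invertibleOfLeftInverse J J hJ
  haveI : Invertible a := a.invertibleOfIsUnitDet (by simp [ha])
  haveI : Invertible b := b.invertibleOfIsUnitDet (by simp [hb])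
  have hJinv : J⁻¹ = J := Matrix.inv_eq_left_inv hJ
  simp only [Matrix.mul_inv_rev, hJinv, mul_assoc,
    Matrix.mul_inv_cancel_left_of_invertible,
    Matrix.inv_mul_cancel_left_of_invertible]
  have hJJ : ∀ x : Matrix (Fin n) (Fin n) ℝ, J * (J * x) = x := fun x => by
    rw [← mul_assoc, hJ, one_mul]
  simp only [sub_mul, mul_sub, Matrix.mul_one, Matrix.one_mul, mul_assoc, hJJ,
    Matrix.mul_inv_cancel_left_of_invertible,
    Matrix.inv_mul_cancel_left_of_invertible]
  module
end

section
/- For all g, s ∈ SL(n,ℝ) and all u ∈ sl(n,ℝ): P_{g s σ(g)⁻¹}(u) = g · P_s(g⁻¹ u g) · g⁻¹. (This expresses that the bivector field P_S^σ is invariant under the twisted action (g,s) ↦ g s σ(g)⁻¹ of G₊^σ on S ≅ G.) -/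
/-- The bivector P_S^σ(s) of the paper read through the trace-form
identification: P_s(u) = ½(σ(s)⁻¹ σ(u) σ(s) − s σ(u) s⁻¹), with σ(m) = J m J. -/
noncomputable def Pbiv {n : ℕ} (J s u : Matrix (Fin n) (Fin n) ℝ) : Matrix (Fin n) (Fin n) ℝ :=
  (2:ℝ)⁻¹ • ((J * s * J)⁻¹ * (J * u * J) * (J * s * J) - s * (J * u * J) * s⁻¹)

/- STATEMENT 9: the bivector field P_S^σ is invariant under the twisted action
(g,s) ↦ g s σ(g)⁻¹: P_{g s σ(g)⁻¹}(u) = g · P_s(g⁻¹ u g) · g⁻¹. -/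
theorem stmt_9 (n : ℕ) (hn : 2 ≤ n)
    (J g s u : Matrix (Fin n) (Fin n) ℝ)
    (hJ : J * J = 1) (hg : g.det = 1) (hs : s.det = 1)
    (hu : u.trace = 0) :
    Pbiv J (g * s * (J * g * J)⁻¹) u = g * Pbiv J s (g⁻¹ * u * g) * g⁻¹ := by
  have hgi : g⁻¹ * g = 1 := Matrix.nonsing_inv_mul g (by simp [hg])
  have hgi' : g * g⁻¹ = 1 := Matrix.mul_nonsing_inv g (by simp [hg])
  have hsi : s⁻¹ * s = 1 := Matrix.nonsing_inv_mul s (by simp [hs])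
  have hsi' : s * s⁻¹ = 1 := Matrix.mul_nonsing_inv s (by simp [hs])
  have h2 : ∀ x : Matrix (Fin n) (Fin n) ℝ, J * (J * x) = x := by
    intro x; rw [← mul_assoc, hJ, one_mul]
  have h3 : ∀ x : Matrix (Fin n) (Fin n) ℝ, g⁻¹ * (g * x) = x := by
    intro x; rw [← mul_assoc, hgi, one_mul]
  have h4 : ∀ x : Matrix (Fin n) (Fin n) ℝ, g * (g⁻¹ * x) = x := by
    intro x; rw [← mul_assoc, hgi', one_mul]
  have h5 : ∀ x : Matrix (Fin n) (Fin n) ℝ, s⁻¹ * (s * x) = x := by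
    intro x; rw [← mul_assoc, hsi, one_mul]
  have h6 : ∀ x : Matrix (Fin n) (Fin n) ℝ, s * (s⁻¹ * x) = x := by
    intro x; rw [← mul_assoc, hsi', one_mul]
  have hJgJ : (J * g * J)⁻¹ = J * g⁻¹ * J := by
    apply Matrix.inv_eq_left_inv
    calc J * g⁻¹ * J * (J * g * J) = J * (g⁻¹ * (J * (J * (g * J)))) := by noncomm_ring
      _ = 1 := by rw [h2, h3, hJ]
  have hJsJ : (J * s * J)⁻¹ = J * s⁻¹ * J := by
    apply Matrix.inv_eq_left_inv
    calc J * s⁻¹ * J * (J * s * J) = J * (s⁻¹ * (J * (J * (s * J)))) := by noncomm_ring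
      _ = 1 := by rw [h2, h5, hJ]
  have ht : (g * s * (J * g⁻¹ * J))⁻¹ = J * g * J * s⁻¹ * g⁻¹ := by
    apply Matrix.inv_eq_left_inv
    calc J * g * J * s⁻¹ * g⁻¹ * (g * s * (J * g⁻¹ * J))
        = J * (g * (J * (s⁻¹ * (g⁻¹ * (g * (s * (J * (g⁻¹ * J)))))))) := by noncomm_ring
      _ = 1 := by rw [h3, h5, h2, h4, hJ]
  have hσt : (J * (g * s * (J * g⁻¹ * J)) * J)⁻¹ = g * J * s⁻¹ * g⁻¹ * J := by
    apply Matrix.inv_eq_left_inv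
    calc g * J * s⁻¹ * g⁻¹ * J * (J * (g * s * (J * g⁻¹ * J)) * J)
        = g * (J * (s⁻¹ * (g⁻¹ * (J * (J * (g * (s * (J * (g⁻¹ * (J * J)))))))))) := by
          noncomm_ring
      _ = 1 := by rw [hJ, mul_one, h2, h3, h5, h2, hgi']
  rw [Pbiv, Pbiv, hJgJ, hJsJ, hσt, ht]
  rw [Matrix.mul_smul, Matrix.smul_mul]
  congr 1
  simp only [Matrix.mul_sub, Matrix.sub_mul, mul_assoc, h2, h3, h4, h5, h6, hJ, mul_one]
end

section
/- For every s ∈ SL(n,ℝ), the image of the linear map P_s : sl(n,ℝ) → sl(n,ℝ) equals { (1 − A_s)((1 + A_s)(y)) : y ∈ sl(n,ℝ) }, where A_s : sl(n,ℝ) → sl(n,ℝ) is A_s(v) = s σ(v) s⁻¹. In particular, the image of P_s is contained in { x − s σ(x) s⁻¹ : x ∈ sl(n,ℝ) }, the tangent space at s to the orbit of s under the twisted action (g,s) ↦ g s σ(g)⁻¹. -/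
/- STATEMENT 10: Im P_s = {(1 − A_s)((1 + A_s)(y)) : y ∈ sl(n,ℝ)} where
A_s(v) = s σ(v) s⁻¹; in particular Im P_s ⊆ {x − s σ(x) s⁻¹ : x ∈ sl(n,ℝ)},
the tangent space at s to the twisted orbit. -/
theorem stmt_10 (n : ℕ) (hn : 2 ≤ n)
    (J s : Matrix (Fin n) (Fin n) ℝ)
    (hJ : J * J = 1) (hs : s.det = 1) :
    ({v | ∃ u : Matrix (Fin n) (Fin n) ℝ, u.trace = 0 ∧ Pbiv J s u = v}
        = {v | ∃ y : Matrix (Fin n) (Fin n) ℝ, y.trace = 0 ∧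
            v = (y + s * (J * y * J) * s⁻¹)
              - s * (J * (y + s * (J * y * J) * s⁻¹) * J) * s⁻¹}) ∧
    ({v | ∃ u : Matrix (Fin n) (Fin n) ℝ, u.trace = 0 ∧ Pbiv J s u = v}
        ⊆ {v | ∃ x : Matrix (Fin n) (Fin n) ℝ, x.trace = 0 ∧
            v = x - s * (J * x * J) * s⁻¹}) := by
  have hds : IsUnit s.det := by rw [hs]; exact isUnit_one
  have hs1 : s * s⁻¹ = 1 := Matrix.mul_nonsing_inv s hds
  have hs2 : s⁻¹ * s = 1 := Matrix.nonsing_inv_mul s hds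
  have hJJ : ∀ x : Matrix (Fin n) (Fin n) ℝ, J * (J * x) = x := fun x => by
    rw [← mul_assoc, hJ, one_mul]
  have hss' : ∀ x : Matrix (Fin n) (Fin n) ℝ, s * (s⁻¹ * x) = x := fun x => by
    rw [← mul_assoc, hs1, one_mul]
  have hs's : ∀ x : Matrix (Fin n) (Fin n) ℝ, s⁻¹ * (s * x) = x := fun x => by
    rw [← mul_assoc, hs2, one_mul]
  have hinv : (J * s * J)⁻¹ = J * s⁻¹ * J := by
    apply Matrix.inv_eq_right_inv
    calc J * s * J * (J * s⁻¹ * J) = J * (s * (J * (J * (s⁻¹ * J)))) := by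
          simp only [mul_assoc]
      _ = 1 := by rw [hJJ, hss', hJ]
  have htr : ∀ y : Matrix (Fin n) (Fin n) ℝ,
      (s * (J * y * J) * s⁻¹).trace = y.trace := by
    intro y
    rw [Matrix.trace_mul_comm, ← mul_assoc, hs2, one_mul,
      Matrix.trace_mul_comm, ← mul_assoc, hJ, one_mul]
  have htr2 : ∀ u : Matrix (Fin n) (Fin n) ℝ,
      (J * (s⁻¹ * u * s) * J).trace = u.trace := by
    intro u
    rw [Matrix.trace_mul_comm, hJJ, Matrix.trace_mul_comm, hss']
  have key : ∀ v, (∃ u : Matrix (Fin n) (Fin n) ℝ, u.trace = 0 ∧ Pbiv J s u = v) ↔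
      (∃ y : Matrix (Fin n) (Fin n) ℝ, y.trace = 0 ∧
            v = (y + s * (J * y * J) * s⁻¹)
              - s * (J * (y + s * (J * y * J) * s⁻¹) * J) * s⁻¹) := by
    intro v
    constructor
    · rintro ⟨u, hu, rfl⟩
      refine ⟨(2:ℝ)⁻¹ • (J * (s⁻¹ * u * s) * J), ?_, ?_⟩
      · rw [Matrix.trace_smul, htr2, hu, smul_zero]
      · unfold Pbiv
        rw [hinv]
        simp only [Matrix.smul_mul, Matrix.mul_smul, smul_sub, smul_add,
          mul_add, add_mul, mul_sub, sub_mul, mul_assoc, hJJ, hss', hs's,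
          hJ, hs1, hs2, mul_one, one_mul, smul_smul]
        norm_num
        abel
    · rintro ⟨y, hy, rfl⟩
      refine ⟨(2:ℝ) • (s * (J * y * J) * s⁻¹), ?_, ?_⟩
      · rw [Matrix.trace_smul, htr, hy, smul_zero]
      · unfold Pbiv
        rw [hinv]
        simp only [Matrix.smul_mul, Matrix.mul_smul, smul_sub, smul_add,
          mul_add, add_mul, mul_sub, sub_mul, mul_assoc, hJJ, hss', hs's,
          hJ, hs1, hs2, mul_one, one_mul, smul_smul]
        norm_num
        abel
  constructor
  · ext v
    simp only [Set.mem_setOf_eq]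
    exact key v
  · rintro v ⟨u, hu, hv⟩
    obtain ⟨y, hy, hvy⟩ := (key v).1 ⟨u, hu, hv⟩
    refine ⟨y + s * (J * y * J) * s⁻¹, ?_, hvy⟩
    rw [Matrix.trace_add, htr, hy, add_zero]
end

section
/- For every s ∈ SL(2,ℝ) and all y, z ∈ sl(2,ℝ), with τ_s : sl(2,ℝ) → sl(2,ℝ) given by τ_s(v) = s H v H s⁻¹ − H s⁻¹ v s H: [y, τ_s(z)] + [τ_s(y), z] − τ_s([y,z]) = 0. (Since ½[P_S^σ, P_S^σ](K(x,·), K(y,·), K(z,·)) = ¼ K(x, [y,τ_s(z)] + [τ_s(y),z] − τ_s([y,z])) and K is nondegenerate, this says exactly that the Schouten bracket [P_S^σ, P_S^σ] vanishes, i.e. P_S^σ is a genuine Poisson bivector field on SL(2,ℝ).) -/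
set_option maxHeartbeats 4000000

/-- H = [[1,0],[0,−1]]. -/
noncomputable def Hmat : Matrix (Fin 2) (Fin 2) ℝ := !![1, 0; 0, -1]

/-- τ_s(v) = s H v H s⁻¹ − H s⁻¹ v s H. -/
noncomputable def tau (s v : Matrix (Fin 2) (Fin 2) ℝ) : Matrix (Fin 2) (Fin 2) ℝ :=
  s * Hmat * v * Hmat * s⁻¹ - Hmat * s⁻¹ * v * s * Hmat

/-- variant of τ with an explicit "inverse" argument. -/
noncomputable def tau' (S Si v : Matrix (Fin 2) (Fin 2) ℝ) : Matrix (Fin 2) (Fin 2) ℝ :=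
  S * Hmat * v * Hmat * Si - Hmat * Si * v * S * Hmat

lemma aux (S Si Y Z : Matrix (Fin 2) (Fin 2) ℝ)
    (hSi : Si = !![S 1 1, -(S 0 1); -(S 1 0), S 0 0])
    (hY : Y 1 1 = -Y 0 0) (hZ : Z 1 1 = -Z 0 0) :
    ⁅Y, tau' S Si Z⁆ + ⁅tau' S Si Y, Z⁆ - tau' S Si ⁅Y, Z⁆ = 0 := by
  subst hSi
  ext i j
  fin_cases i <;> fin_cases j <;>
  · simp only [tau', Hmat, Ring.lie_def, Matrix.sub_apply, Matrix.add_apply,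
      Matrix.mul_apply, Fin.sum_univ_two, Matrix.zero_apply, Matrix.neg_apply,
      Matrix.cons_val_zero, Matrix.cons_val_one, Matrix.head_cons, Matrix.head_fin_const,
      Matrix.cons_val', Matrix.empty_val', Matrix.cons_val_fin_one, Fin.isValue,
      Fin.mk_zero, Fin.mk_one, Matrix.of_apply, hY, hZ]
    ring

/- STATEMENT 11: for every s ∈ SL(2,ℝ) and trace-zero y, z:
[y, τ_s(z)] + [τ_s(y), z] − τ_s([y,z]) = 0, i.e. the Schouten bracket
[P_S^σ, P_S^σ] vanishes and P_S^σ is a genuine Poisson bivector on SL(2,ℝ). -/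
theorem stmt_11 (s y z : Matrix (Fin 2) (Fin 2) ℝ)
    (hs : s.det = 1) (hy : y.trace = 0) (hz : z.trace = 0) :
    ⁅y, tau s z⁆ + ⁅tau s y, z⁆ - tau s ⁅y, z⁆ = 0 := by
  have hinv : s⁻¹ = !![s 1 1, -(s 0 1); -(s 1 0), s 0 0] := by
    rw [Matrix.inv_def, hs, Matrix.adjugate_fin_two]
    simp
  have htau : tau s = tau' s s⁻¹ := rfl
  rw [Matrix.trace_fin_two] at hy hz
  rw [htau]
  exact aux s s⁻¹ y z hinv (by linarith) (by linarith)
end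

section
/- For every z ∈ I and every nonzero integer n, conjugation by exp(nπH) = diag(e^{nπ}, e^{−nπ}) moves z: diag(e^{nπ}, e^{−nπ}) · z · diag(e^{−nπ}, e^{nπ}) ≠ z. (Since σ fixes each element of F = {exp(nπH) : n ∈ ℤ} and the twisted action of F on I reduces to conjugation, this says the action of F on the open set I is free, so that the quotient F\I — the massive non-rotating BTZ black hole — is a smooth manifold.) -/
/- STATEMENT 14: for z in the domain I = {z ∈ SL(2,ℝ) : z₁₂ z₂₁ < 0} and any
nonzero integer n, conjugation by exp(nπH) = diag(e^{nπ}, e^{−nπ}) moves z, so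
the action of F = {exp(nπH)} on I is free. -/
theorem stmt_14 (z : Matrix (Fin 2) (Fin 2) ℝ)
    (hz : z.det = 1) (hI : z 0 1 * z 1 0 < 0)
    (n : ℤ) (hn : n ≠ 0) :
    !![Real.exp ((n : ℝ) * Real.pi), 0; 0, Real.exp (-((n : ℝ) * Real.pi))] * z *
        !![Real.exp (-((n : ℝ) * Real.pi)), 0; 0, Real.exp ((n : ℝ) * Real.pi)]
      ≠ z := by
  intro h
  have h01 := congrFun (congrFun h 0) 1
  simp [Matrix.mul_apply, Matrix.vecMul, dotProduct, Fin.sum_univ_two] at h01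
  -- h01 : exp(nπ) * z 0 1 * exp(nπ) = z 0 1
  have hz01 : z 0 1 ≠ 0 := by
    intro h0
    rw [h0] at hI
    simp at hI
  have hexp : Real.exp ((n : ℝ) * Real.pi) * Real.exp ((n : ℝ) * Real.pi) = 1 := by
    have := h01
    field_simp at this ⊢
    rcases mul_eq_mul_right_iff.mp (by linarith [this] : Real.exp ((n : ℝ) * Real.pi) * Real.exp ((n : ℝ) * Real.pi) * z 0 1 = 1 * z 0 1) with h' | h'
    · linarith [h', sq (Real.exp ((n : ℝ) * Real.pi))]
    · exact absurd h' hz01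
  rw [← Real.exp_add] at hexp
  rw [show (1:ℝ) = Real.exp 0 by simp] at hexp
  have := Real.exp_injective hexp
  have hπ := Real.pi_pos
  have hnn : (n : ℝ) ≠ 0 := Int.cast_ne_zero.mpr hn
  have hnπ : (n : ℝ) * Real.pi = 0 := by linarith
  rcases mul_eq_zero.mp hnπ with h' | h'
  · exact hnn h'
  · linarith
end
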